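/- Let Ω be a measure space with finite total measure |Ω| > 0, let M₁, M₂ > 0, and let A, B, C ∈ L²(Ω) be nonnegative functions satisfying the conservation relations (1/|Ω|)∫_Ω A² + (1/|Ω|)∫_Ω C² = M₁ and (1/|Ω|)∫_Ω B² + (1/|Ω|)∫_Ω C² = M₂. Set ε := (M₁/2)·|Ω|/(|Ω| + 2 + 2·M₂·|Ω|). If ∫_Ω (A − Ā)² ≤ ε, ∫_Ω (C − C̄)² ≤ ε, and Ā < √ε, then ∫_Ω (Ā·B − C̄)² ≥ M₁·|Ω|/4 ≥ (M₁/(4·M₂))·∫_Ω (B − B̄)². -/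

import Mathlib

open MeasureTheory

private lemma expand_sq_int {Ω : Type*} [MeasurableSpace Ω] (μ : Measure Ω) [IsFiniteMeasure μ]
    (f : Ω → ℝ) (hf : MemLp f 2 μ) (m : ℝ) :
    (∫ x, (f x - m)^2 ∂μ) =
      (∫ x, (f x)^2 ∂μ) - 2 * m * (∫ x, f x ∂μ) + m^2 * (μ Set.univ).toReal := by
  have h1 : Integrable (fun x => (f x)^2) μ := hf.integrable_sq
  have h2 : Integrable f μ := hf.integrable one_le_two
  have h3 : (fun x => (f x - m)^2) = fun x => (f x)^2 - (2*m) * f x + m^2 :=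
    funext fun x => by ring
  have hi : Integrable (fun x => f x ^ 2 - 2 * m * f x) μ := h1.sub (h2.const_mul _)
  rw [h3, integral_add hi (integrable_const _),
    integral_sub h1 (h2.const_mul _), integral_const_mul, integral_const, smul_eq_mul, measureReal_def]
  ring

private lemma key_arith (V a b c ε M₁ M₂ IB2 : ℝ)
    (hV : 0 < V) (hε0 : 0 ≤ ε) (haε : a ^ 2 ≤ ε)
    (hb2 : V * b ^ 2 ≤ IB2) (hb2M : b ^ 2 ≤ M₂)
    (hc2 : M₁ * V - ε * (V + 2) ≤ V * c ^ 2)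
    (hεid : ε * (V + 2 + 2 * M₂ * V) = M₁ * V / 2) :
    a ^ 2 * IB2 - 2 * c * (a * (V * b)) + c ^ 2 * V ≥ M₁ * V / 4 := by
  have h1 : a ^ 2 * (V * b ^ 2) ≤ a ^ 2 * IB2 :=
    mul_le_mul_of_nonneg_left hb2 (sq_nonneg a)
  have h3 : c ^ 2 / 2 - (a * b) ^ 2 ≤ (a * b - c) ^ 2 := by
    nlinarith [sq_nonneg (c - 2 * (a * b))]
  have h4 : V * (c ^ 2 / 2 - (a * b) ^ 2) ≤ V * (a * b - c) ^ 2 :=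
    mul_le_mul_of_nonneg_left h3 hV.le
  have h5 : (a * b) ^ 2 ≤ ε * M₂ := by
    have he : (a * b) ^ 2 = a ^ 2 * b ^ 2 := by ring
    rw [he]; exact mul_le_mul haε hb2M (sq_nonneg b) hε0
  have h6 : V * (a * b) ^ 2 ≤ V * (ε * M₂) := mul_le_mul_of_nonneg_left h5 hV.le
  have hεid' : ε * (V + 2) + 2 * (V * (ε * M₂)) = M₁ * V / 2 := by linear_combination hεid
  calc a ^ 2 * IB2 - 2 * c * (a * (V * b)) + c ^ 2 * V
      ≥ a ^ 2 * (V * b ^ 2) - 2 * c * (a * (V * b)) + c ^ 2 * V := by linarith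
    _ = V * (a * b - c) ^ 2 := by ring
    _ ≥ V * (c ^ 2 / 2 - (a * b) ^ 2) := h4
    _ = V * c ^ 2 / 2 - V * (a * b) ^ 2 := by ring
    _ ≥ (M₁ * V - ε * (V + 2)) / 2 - V * (ε * M₂) := by linarith
    _ ≥ M₁ * V / 4 := by linarith

set_option maxHeartbeats 1000000 in
theorem stmt_7 {Ω : Type*} [MeasurableSpace Ω] (μ : Measure Ω) [IsFiniteMeasure μ]
    (hμ : 0 < μ Set.univ) (M₁ M₂ : ℝ) (hM₁ : 0 < M₁) (hM₂ : 0 < M₂)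
    (A B C : Ω → ℝ) (hA : MemLp A 2 μ) (hB : MemLp B 2 μ) (hC : MemLp C 2 μ)
    (hA0 : ∀ x, 0 ≤ A x) (hB0 : ∀ x, 0 ≤ B x) (hC0 : ∀ x, 0 ≤ C x)
    (hcons₁ : (⨍ y, (A y)^2 ∂μ) + (⨍ y, (C y)^2 ∂μ) = M₁)
    (hcons₂ : (⨍ y, (B y)^2 ∂μ) + (⨍ y, (C y)^2 ∂μ) = M₂)
    (ε : ℝ)
    (hε : ε = (M₁/2) * (μ Set.univ).toReal /
      ((μ Set.univ).toReal + 2 + 2 * M₂ * (μ Set.univ).toReal))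
    (hδA : (∫ x, (A x - ⨍ y, A y ∂μ)^2 ∂μ) ≤ ε)
    (hδC : (∫ x, (C x - ⨍ y, C y ∂μ)^2 ∂μ) ≤ ε)
    (hAbar : (⨍ y, A y ∂μ) < Real.sqrt ε) :
    (∫ x, ((⨍ y, A y ∂μ) * B x - ⨍ y, C y ∂μ)^2 ∂μ) ≥ M₁ * (μ Set.univ).toReal / 4
      ∧ M₁ * (μ Set.univ).toReal / 4 ≥ (M₁ / (4 * M₂)) * ∫ x, (B x - ⨍ y, B y ∂μ)^2 ∂μ := by
  set V : ℝ := (μ Set.univ).toReal with hVdef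
  have hV : 0 < V := ENNReal.toReal_pos hμ.ne' (measure_ne_top μ _)
  set a : ℝ := ⨍ y, A y ∂μ with hadef
  set b : ℝ := ⨍ y, B y ∂μ with hbdef
  set c : ℝ := ⨍ y, C y ∂μ with hcdef
  -- integrals in terms of averages
  have hIA : (∫ x, A x ∂μ) = V * a := by
    rw [hadef, average_eq, smul_eq_mul, measureReal_def, ← hVdef]; field_simp
  have hIB : (∫ x, B x ∂μ) = V * b := by
    rw [hbdef, average_eq, smul_eq_mul, measureReal_def, ← hVdef]; field_simp
  have hIC : (∫ x, C x ∂μ) = V * c := by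
    rw [hcdef, average_eq, smul_eq_mul, measureReal_def, ← hVdef]; field_simp
  -- conservation in integral form
  have hA2avg : (⨍ y, (A y)^2 ∂μ) = (∫ x, (A x)^2 ∂μ) / V := by
    rw [average_eq, smul_eq_mul, measureReal_def, ← hVdef]; field_simp
  have hB2avg : (⨍ y, (B y)^2 ∂μ) = (∫ x, (B x)^2 ∂μ) / V := by
    rw [average_eq, smul_eq_mul, measureReal_def, ← hVdef]; field_simp
  have hC2avg : (⨍ y, (C y)^2 ∂μ) = (∫ x, (C x)^2 ∂μ) / V := by
    rw [average_eq, smul_eq_mul, measureReal_def, ← hVdef]; field_simp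
  rw [hA2avg, hC2avg] at hcons₁
  rw [hB2avg, hC2avg] at hcons₂
  have hcons₁' : (∫ x, (A x)^2 ∂μ) + (∫ x, (C x)^2 ∂μ) = M₁ * V := by
    field_simp at hcons₁; linarith
  have hcons₂' : (∫ x, (B x)^2 ∂μ) + (∫ x, (C x)^2 ∂μ) = M₂ * V := by
    field_simp at hcons₂; linarith
  -- variance identities
  have EA : (∫ x, (A x - a)^2 ∂μ) = (∫ x, (A x)^2 ∂μ) - V * a^2 := by
    rw [expand_sq_int μ A hA a, hIA]; ring
  have EB : (∫ x, (B x - b)^2 ∂μ) = (∫ x, (B x)^2 ∂μ) - V * b^2 := by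
    rw [expand_sq_int μ B hB b, hIB]; ring
  have EC : (∫ x, (C x - c)^2 ∂μ) = (∫ x, (C x)^2 ∂μ) - V * c^2 := by
    rw [expand_sq_int μ C hC c, hIC]; ring
  -- positivity of ε and a² ≤ ε
  have hden : 0 < V + 2 + 2 * M₂ * V := by positivity
  have hε0 : 0 ≤ ε := by rw [hε]; positivity
  have hεid : ε * (V + 2 + 2 * M₂ * V) = M₁ * V / 2 := by
    rw [hε]; field_simp
  have ha0 : 0 ≤ a := by
    rw [hadef, average_eq, smul_eq_mul]
    exact mul_nonneg (by positivity) (integral_nonneg hA0)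
  have haε : a^2 ≤ ε := ((Real.lt_sqrt ha0).mp hAbar).le
  -- basic bounds
  have hC2nn : 0 ≤ ∫ x, (C x)^2 ∂μ := integral_nonneg fun x => sq_nonneg _
  have hBvar_nn : 0 ≤ ∫ x, (B x - b)^2 ∂μ := integral_nonneg fun x => sq_nonneg _
  have hB2le : (∫ x, (B x)^2 ∂μ) ≤ M₂ * V := by linarith
  have hb2 : V * b^2 ≤ ∫ x, (B x)^2 ∂μ := by linarith
  have hb2M : b^2 ≤ M₂ :=
    le_of_mul_le_mul_left (by linarith : V * b^2 ≤ V * M₂) hV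
  have hVaε : V * a^2 ≤ V * ε := mul_le_mul_of_nonneg_left haε hV.le
  have hA2le : (∫ x, (A x)^2 ∂μ) ≤ ε + V * ε := by linarith
  have hεexp : ε * (V + 2) = ε * V + 2 * ε := by ring
  have hc2 : M₁ * V - ε * (V + 2) ≤ V * c^2 := by
    have h1 : (∫ x, (C x)^2 ∂μ) ≥ M₁ * V - ε - V * ε := by linarith
    have h2 : V * c^2 ≥ (∫ x, (C x)^2 ∂μ) - ε := by linarith
    linarith
  -- main integral expansion
  have hL : (∫ x, (a * B x - c)^2 ∂μ) =
      a^2 * (∫ x, (B x)^2 ∂μ) - 2 * c * (a * (V * b)) + c^2 * V := by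
    have hexp := expand_sq_int μ (fun x => a * B x) (hB.const_mul a) c
    have h1 : (∫ x, a * B x ∂μ) = a * (V * b) := by
      rw [integral_const_mul, hIB]
    have h2 : (∫ x, (a * B x)^2 ∂μ) = a^2 * ∫ x, (B x)^2 ∂μ := by
      simp only [mul_pow]
      rw [integral_const_mul]
    rw [hexp, h1, h2]
  constructor
  · rw [hL]
    exact key_arith V a b c ε M₁ M₂ _ hV hε0 haε hb2 hb2M hc2 hεid
  · have hVb2 : 0 ≤ V * b^2 := by positivity
    have hX : (∫ x, (B x - b)^2 ∂μ) ≤ M₂ * V := by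
      rw [EB]; linarith
    have hcoef : 0 ≤ M₁ / (4 * M₂) := by positivity
    have hmul := mul_le_mul_of_nonneg_left hX hcoef
    have heq : M₁ / (4 * M₂) * (M₂ * V) = M₁ * V / 4 := by field_simp
    linarith
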